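/- Define the suffix heap of S as the trie in which the node labelled i (in pre-order rank) has path label a prefix of S[SA[i]..n], built by the sequential construction over i = 1..n (shortest absent prefix of S[SA[i]..n]). Then in the suffix heap, the label of every node equals its rank in a pre-order traversal of the heap. -/

import Mathlib

/-- The sequential construction of the suffix heap: at step `i + 1` we insert
the shortest prefix of the lexicographically `(i + 1)`-st suffix
`S[SA(i+1)..n]` that is absent from the current trie. -/
def suffixHeapBuild {α : Type} [DecidableEq α] (S : List α) (SA : ℕ → ℕ) :
    ℕ → Finset (List α)
  | 0 => {([] : List α)}
  | i + 1 =>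
    match ((S.drop (SA (i + 1) - 1)).inits).find?
        (fun p => decide (p ∉ suffixHeapBuild S SA i)) with
    | some p => insert p (suffixHeapBuild S SA i)
    | none => suffixHeapBuild S SA i

section Aux

/-- In `l.inits.find? P = some p`, every strict prefix of `p` fails `P`. -/
theorem find?_inits_prefix_false {α : Type} :
    ∀ (l : List α) (P : List α → Bool) (p : List α), l.inits.find? P = some p →
      ∀ q, q <+: p → q ≠ p → P q = false := by
  intro l
  induction l with
  | nil =>
    intro P p h q hq hne
    simp only [List.inits] at h
    rcases List.find?_some h with _
    have : p = [] := by
      have := List.mem_of_find?_eq_some h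
      simpa using this
    subst this
    exact absurd (List.prefix_nil.mp hq) hne
  | cons a l ih =>
    intro P p h q hq hne
    rw [List.inits_cons] at h
    by_cases h0 : P [] = true
    · rw [List.find?_cons_of_pos h0] at h
      have : p = [] := by simpa using h.symm
      subst this
      exact absurd (List.prefix_nil.mp hq) hne
    · rw [List.find?_cons_of_neg h0, List.find?_map] at h
      rcases Option.map_eq_some_iff.mp h with ⟨p', hp', rfl⟩
      cases q with
      | nil => exact Bool.eq_false_iff.mpr h0
      | cons b q' =>
        rcases List.cons_prefix_cons.mp hq with ⟨hb, hq'⟩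
        subst hb
        have hne' : q' ≠ p' := fun hh => hne (by rw [hh])
        exact ih _ p' hp' q' hq' hne'

theorem lex_irrefl {α : Type} [LinearOrder α] :
    ∀ (l : List α), ¬ List.Lex (· < ·) l l := by
  intro l
  induction l with
  | nil => intro h; cases h
  | cons a l ih =>
    intro h
    cases h with
    | rel h => exact lt_irrefl _ h
    | cons h => exact ih h

theorem lex_of_prefix {α : Type} [LinearOrder α] :
    ∀ (a x b y : List α), a <+: x → b <+: y → List.Lex (· < ·) x y →
      ¬ (b <+: a) → List.Lex (· < ·) a b := by
  intro a
  induction a with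
  | nil =>
    intro x b y _ _ _ hba
    cases b with
    | nil => exact absurd (List.prefix_refl _) hba
    | cons c cs => exact List.Lex.nil
  | cons ha ta ih =>
    intro x b y hax hby hxy hba
    cases b with
    | nil => exact absurd (List.nil_prefix) hba
    | cons hb tb =>
      obtain ⟨x', rfl⟩ := hax
      obtain ⟨y', rfl⟩ := hby
      simp only [List.cons_append] at hxy
      cases hxy with
      | rel h => exact List.Lex.rel h
      | cons h =>
        refine List.Lex.cons (ih _ tb _ ⟨x', rfl⟩ ⟨y', rfl⟩ h ?_)
        intro hp
        exact hba (List.cons_prefix_cons.mpr ⟨rfl, hp⟩)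

variable {α : Type} [LinearOrder α] (S : List α) (SA : ℕ → ℕ)

theorem suffixHeapBuild_succ_of_some {k : ℕ} {p : List α}
    (h : ((S.drop (SA (k + 1) - 1)).inits).find?
        (fun q => decide (q ∉ suffixHeapBuild S SA k)) = some p) :
    suffixHeapBuild S SA (k + 1) = insert p (suffixHeapBuild S SA k) := by
  rw [suffixHeapBuild, h]

theorem suffixHeapBuild_succ_of_none {k : ℕ}
    (h : ((S.drop (SA (k + 1) - 1)).inits).find?
        (fun q => decide (q ∉ suffixHeapBuild S SA k)) = none) :
    suffixHeapBuild S SA (k + 1) = suffixHeapBuild S SA k := by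
  rw [suffixHeapBuild, h]

theorem suffixHeapBuild_subset_succ (k : ℕ) :
    suffixHeapBuild S SA k ⊆ suffixHeapBuild S SA (k + 1) := by
  cases h : ((S.drop (SA (k + 1) - 1)).inits).find?
      (fun q => decide (q ∉ suffixHeapBuild S SA k)) with
  | none => rw [suffixHeapBuild_succ_of_none S SA h]
  | some p =>
    rw [suffixHeapBuild_succ_of_some S SA h]
    exact Finset.subset_insert _ _

theorem suffixHeapBuild_subset {i j : ℕ} (h : i ≤ j) :
    suffixHeapBuild S SA i ⊆ suffixHeapBuild S SA j := by
  induction j with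
  | zero => simpa [Nat.le_zero.mp h] using Finset.Subset.refl _
  | succ j ih =>
    rcases Nat.lt_or_ge i (j + 1) with hj | hj
    · exact (ih (Nat.lt_succ_iff.mp hj)).trans (suffixHeapBuild_subset_succ S SA j)
    · have : i = j + 1 := le_antisymm h hj
      subst this; exact Finset.Subset.refl _

theorem nil_mem_suffixHeapBuild (k : ℕ) : ([] : List α) ∈ suffixHeapBuild S SA k :=
  suffixHeapBuild_subset S SA (Nat.zero_le k) (by simp [suffixHeapBuild])

/-- Every member of the trie is `[]` or a prefix of an earlier suffix. -/
theorem mem_suffixHeapBuild_char :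
    ∀ (k : ℕ) (q : List α), q ∈ suffixHeapBuild S SA k →
      q = [] ∨ ∃ j, 1 ≤ j ∧ j ≤ k ∧ q <+: S.drop (SA j - 1) := by
  intro k
  induction k with
  | zero => intro q hq; left; simpa [suffixHeapBuild] using hq
  | succ k ih =>
    intro q hq
    cases h : ((S.drop (SA (k + 1) - 1)).inits).find?
        (fun r => decide (r ∉ suffixHeapBuild S SA k)) with
    | none =>
      rw [suffixHeapBuild_succ_of_none S SA h] at hq
      rcases ih q hq with h1 | ⟨j, h1, h2, h3⟩
      · exact Or.inl h1
      · exact Or.inr ⟨j, h1, h2.trans (Nat.le_succ k), h3⟩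
    | some p =>
      rw [suffixHeapBuild_succ_of_some S SA h] at hq
      rcases Finset.mem_insert.mp hq with rfl | hq'
      · right
        refine ⟨k + 1, Nat.succ_le_succ (Nat.zero_le k), le_refl _, ?_⟩
        exact List.mem_inits _ _ |>.mp (List.mem_of_find?_eq_some h)
      · rcases ih q hq' with h1 | ⟨j, h1, h2, h3⟩
        · exact Or.inl h1
        · exact Or.inr ⟨j, h1, h2.trans (Nat.le_succ k), h3⟩

/-- The trie is prefix-closed. -/
theorem suffixHeapBuild_prefix_closed :
    ∀ (k : ℕ) (q : List α), q ∈ suffixHeapBuild S SA k →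
      ∀ r, r <+: q → r ∈ suffixHeapBuild S SA k := by
  intro k
  induction k with
  | zero =>
    intro q hq r hr
    simp only [suffixHeapBuild, Finset.mem_singleton] at hq ⊢
    subst hq
    exact List.prefix_nil.mp hr
  | succ k ih =>
    intro q hq r hr
    cases h : ((S.drop (SA (k + 1) - 1)).inits).find?
        (fun s => decide (s ∉ suffixHeapBuild S SA k)) with
    | none =>
      rw [suffixHeapBuild_succ_of_none S SA h] at hq ⊢
      exact ih q hq r hr
    | some p =>
      rw [suffixHeapBuild_succ_of_some S SA h] at hq ⊢
      rcases Finset.mem_insert.mp hq with rfl | hq'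
      · by_cases hrp : r = q
        · subst hrp; exact Finset.mem_insert_self _ _
        · have := find?_inits_prefix_false _ _ _ h r hr hrp
          have : r ∈ suffixHeapBuild S SA k := by
            by_contra hcon
            simp [hcon] at this
          exact Finset.mem_insert_of_mem this
      · exact Finset.mem_insert_of_mem (ih q hq' r hr)

end Aux

section Main

variable {α : Type} [LinearOrder α]
variable (S T : List α) (c : α) (SA : ℕ → ℕ)

/-- Every positive-index suffix ends with the terminator. -/
theorem suffix_concat (hS : S = T ++ [c]) {m : ℕ} (h1 : 1 ≤ m) (h2 : m ≤ S.length) :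
    S.drop (m - 1) = T.drop (m - 1) ++ [c] := by
  subst hS
  have hm : m - 1 ≤ T.length := by
    simp only [List.length_append, List.length_singleton] at h2
    omega
  rw [List.drop_append]
  have : m - 1 - T.length = 0 := by omega
  rw [this, List.drop_zero]

theorem count_c_S (hS : S = T ++ [c]) (hc : c ∉ T) : S.count c = 1 := by
  subst hS
  rw [List.count_append, List.count_eq_zero_of_not_mem hc]
  simp

/-- The full suffix `S.drop (SA (k+1) - 1)` is absent from the trie at step `k`. -/
theorem full_suffix_not_mem (hS : S = T ++ [c]) (hc : c ∉ T)
    (hSA : Set.BijOn SA (Set.Icc 1 S.length) (Set.Icc 1 S.length))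
    (hSAsorted : ∀ i j : ℕ, 1 ≤ i → i < j → j ≤ S.length →
      List.Lex (· < ·) (S.drop (SA i - 1)) (S.drop (SA j - 1)))
    {k : ℕ} (hk : k < S.length) :
    S.drop (SA (k + 1) - 1) ∉ suffixHeapBuild S SA k := by
  intro hmem
  have hk1 : (k + 1) ∈ Set.Icc 1 S.length := ⟨Nat.succ_le_succ (Nat.zero_le k), hk⟩
  have hSAk : SA (k + 1) ∈ Set.Icc 1 S.length := hSA.mapsTo hk1
  have hs : S.drop (SA (k + 1) - 1) = T.drop (SA (k + 1) - 1) ++ [c] :=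
    suffix_concat S T c hS hSAk.1 hSAk.2
  rcases mem_suffixHeapBuild_char S SA k _ hmem with h1 | ⟨j, hj1, hj2, hj3⟩
  · rw [hs] at h1; simp at h1
  · have hjIcc : j ∈ Set.Icc 1 S.length := ⟨hj1, hj2.trans (le_of_lt hk)⟩
    have hSAj : SA j ∈ Set.Icc 1 S.length := hSA.mapsTo hjIcc
    have hsj : S.drop (SA j - 1) = T.drop (SA j - 1) ++ [c] :=
      suffix_concat S T c hS hSAj.1 hSAj.2
    obtain ⟨r, hr⟩ := hj3
    rcases eq_or_ne r [] with rfl | hrne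
    · rw [List.append_nil] at hr
      have hlex := hSAsorted j (k + 1) hj1 (Nat.lt_succ_of_le hj2) hk
      rw [hr] at hlex
      exact lex_irrefl _ hlex
    · -- r ≠ [] : then c occurs at least twice in S.drop (SA j - 1)
      have h1 : (S.drop (SA (k + 1) - 1) ++ r).getLast? = some c := by
        rw [hr, hsj]; exact List.getLast?_concat
      rw [List.getLast?_append] at h1
      have hcr : c ∈ r := by
        cases hr' : r.getLast? with
        | none => exact absurd (List.getLast?_eq_none_iff.mp hr') hrne
        | some a =>
          rw [hr'] at h1
          simp only [Option.some_or, Option.some.injEq] at h1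
          subst h1
          exact List.mem_of_getLast? hr'
      have hcs : c ∈ S.drop (SA (k + 1) - 1) := by rw [hs]; simp
      have h2 : 2 ≤ (S.drop (SA j - 1)).count c := by
        rw [← hr, List.count_append]
        have := List.count_pos_iff.mpr hcr
        have := List.count_pos_iff.mpr hcs
        omega
      have h3 : (S.drop (SA j - 1)).count c ≤ S.count c :=
        (List.drop_sublist _ _).count_le c
      rw [count_c_S S T c hS hc] at h3
      omega


theorem find?_succeeds (hS : S = T ++ [c]) (hc : c ∉ T)
    (hSA : Set.BijOn SA (Set.Icc 1 S.length) (Set.Icc 1 S.length))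
    (hSAsorted : ∀ i j : ℕ, 1 ≤ i → i < j → j ≤ S.length →
      List.Lex (· < ·) (S.drop (SA i - 1)) (S.drop (SA j - 1)))
    {k : ℕ} (hk : k < S.length) :
    ∃ p, ((S.drop (SA (k + 1) - 1)).inits).find?
        (fun q => decide (q ∉ suffixHeapBuild S SA k)) = some p := by
  cases h : ((S.drop (SA (k + 1) - 1)).inits).find?
      (fun q => decide (q ∉ suffixHeapBuild S SA k)) with
  | some p => exact ⟨p, rfl⟩
  | none =>
    exfalso
    have h2 := List.find?_eq_none.mp h (S.drop (SA (k + 1) - 1))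
      ((List.mem_inits _ _).mpr (List.prefix_refl _))
    simp only [decide_eq_true_eq, not_not] at h2
    exact full_suffix_not_mem S T c SA hS hc hSA hSAsorted hk h2

theorem mem_lex_inserted
    (hSAsorted : ∀ i j : ℕ, 1 ≤ i → i < j → j ≤ S.length →
      List.Lex (· < ·) (S.drop (SA i - 1)) (S.drop (SA j - 1)))
    {k : ℕ} {p : List α} (hk : k < S.length)
    (h : ((S.drop (SA (k + 1) - 1)).inits).find?
        (fun q => decide (q ∉ suffixHeapBuild S SA k)) = some p) :
    ∀ q ∈ suffixHeapBuild S SA k, List.Lex (· < ·) q p := by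
  intro q hq
  have hpnot : p ∉ suffixHeapBuild S SA k := by
    have := List.find?_some h
    simpa using this
  have hpne : ¬ (p <+: q) := fun hpq =>
    hpnot (suffixHeapBuild_prefix_closed S SA k q hq p hpq)
  have hps : p <+: S.drop (SA (k + 1) - 1) :=
    (List.mem_inits _ _).mp (List.mem_of_find?_eq_some h)
  rcases mem_suffixHeapBuild_char S SA k q hq with rfl | ⟨j, hj1, hj2, hj3⟩
  · cases p with
    | nil => exact absurd (List.prefix_refl _) hpne
    | cons a l => exact List.Lex.nil
  · exact lex_of_prefix q _ p _ hj3 hps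
      (hSAsorted j (k + 1) hj1 (Nat.lt_succ_of_le hj2) hk) hpne

theorem sort_succ_eq
    (hSAsorted : ∀ i j : ℕ, 1 ≤ i → i < j → j ≤ S.length →
      List.Lex (· < ·) (S.drop (SA i - 1)) (S.drop (SA j - 1)))
    {k : ℕ} {p : List α} (hk : k < S.length)
    (h : ((S.drop (SA (k + 1) - 1)).inits).find?
        (fun q => decide (q ∉ suffixHeapBuild S SA k)) = some p) :
    (suffixHeapBuild S SA (k + 1)).sort (· ≤ ·)
      = (suffixHeapBuild S SA k).sort (· ≤ ·) ++ [p] := by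
  have hpnot : p ∉ suffixHeapBuild S SA k := by
    have := List.find?_some h
    simpa using this
  have hperm : List.Perm ((suffixHeapBuild S SA (k + 1)).sort (· ≤ ·))
      ((suffixHeapBuild S SA k).sort (· ≤ ·) ++ [p]) := by
    rw [suffixHeapBuild_succ_of_some S SA h]
    exact (Finset.sort_perm_toList _ _).trans ((Finset.toList_insert hpnot).trans
      (((Finset.sort_perm_toList _ _).symm.cons p).trans
        (List.perm_append_singleton p _).symm))
  have hsorted : ((suffixHeapBuild S SA k).sort (· ≤ ·) ++ [p]).Pairwise (· ≤ ·) := by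
    refine List.pairwise_append.mpr ⟨Finset.pairwise_sort _ _, List.pairwise_singleton _ _, ?_⟩
    intro a ha b hb
    rcases List.mem_singleton.mp hb with rfl
    have haf : a ∈ suffixHeapBuild S SA k := (Finset.mem_sort _).mp ha
    have hlex : List.Lex (· < ·) a b := mem_lex_inserted S SA hSAsorted hk h a haf
    exact le_of_lt hlex
  exact List.Perm.eq_of_pairwise' (Finset.pairwise_sort _ _) hsorted hperm

theorem card_build (hS : S = T ++ [c]) (hc : c ∉ T)
    (hSA : Set.BijOn SA (Set.Icc 1 S.length) (Set.Icc 1 S.length))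
    (hSAsorted : ∀ i j : ℕ, 1 ≤ i → i < j → j ≤ S.length →
      List.Lex (· < ·) (S.drop (SA i - 1)) (S.drop (SA j - 1))) :
    ∀ k ≤ S.length, (suffixHeapBuild S SA k).card = k + 1 := by
  intro k
  induction k with
  | zero => intro _; simp [suffixHeapBuild]
  | succ k ih =>
    intro hk
    obtain ⟨p, hp⟩ := find?_succeeds S T c SA hS hc hSA hSAsorted (Nat.lt_of_succ_le hk)
    have hpnot : p ∉ suffixHeapBuild S SA k := by
      have := List.find?_some hp
      simpa using this
    rw [suffixHeapBuild_succ_of_some S SA hp, Finset.card_insert_of_notMem hpnot,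
      ih (Nat.le_of_succ_le hk)]

theorem sort_prefix (hS : S = T ++ [c]) (hc : c ∉ T)
    (hSA : Set.BijOn SA (Set.Icc 1 S.length) (Set.Icc 1 S.length))
    (hSAsorted : ∀ i j : ℕ, 1 ≤ i → i < j → j ≤ S.length →
      List.Lex (· < ·) (S.drop (SA i - 1)) (S.drop (SA j - 1)))
    {i : ℕ} {p : List α} (hi : i < S.length)
    (h : ((S.drop (SA (i + 1) - 1)).inits).find?
        (fun q => decide (q ∉ suffixHeapBuild S SA i)) = some p) :
    ∀ k, i + 1 ≤ k → k ≤ S.length → ∃ rest,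
      (suffixHeapBuild S SA k).sort (· ≤ ·)
        = (suffixHeapBuild S SA i).sort (· ≤ ·) ++ p :: rest := by
  intro k
  induction k with
  | zero => intro h1 _; omega
  | succ k ih =>
    intro h1 h2
    by_cases hik : i = k
    · subst hik
      exact ⟨[], sort_succ_eq S SA hSAsorted hi h⟩
    · obtain ⟨rest, hrest⟩ := ih (by omega) (by omega)
      obtain ⟨p', hp'⟩ := find?_succeeds S T c SA hS hc hSA hSAsorted
        (Nat.lt_of_succ_le h2)
      refine ⟨rest ++ [p'], ?_⟩
      rw [sort_succ_eq S SA hSAsorted (Nat.lt_of_succ_le h2) hp', hrest]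
      simp

end Main

/-- In the suffix heap of `S` (the trie built sequentially over
`i = 1..n` by inserting the shortest absent prefix of `S[SA(i)..n]`, labelling
the inserted node `i`), the label of every node equals its rank in a pre-order
traversal of the heap (pre-order = lexicographic order of path labels, with the
root, labelled `0`, at rank `0`). -/
theorem suffixHeap_label_eq_preorder_rank
    {α : Type} [LinearOrder α]
    (S T : List α) (c : α) (hS : S = T ++ [c]) (hc : c ∉ T)
    (SA : ℕ → ℕ)
    (hSA : Set.BijOn SA (Set.Icc 1 S.length) (Set.Icc 1 S.length))
    (hSAsorted : ∀ i j : ℕ, 1 ≤ i → i < j → j ≤ S.length →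
      List.Lex (· < ·) (S.drop (SA i - 1)) (S.drop (SA j - 1))) :
    ∀ i < S.length, ∀ p : List α,
      ((S.drop (SA (i + 1) - 1)).inits).find?
          (fun q => decide (q ∉ suffixHeapBuild S SA i)) = some p →
      ((suffixHeapBuild S SA S.length).sort (· ≤ ·))[i + 1]? = some p := by
  intro i hi p h
  obtain ⟨rest, hrest⟩ := sort_prefix S T c SA hS hc hSA hSAsorted hi h
    S.length (by omega) (le_refl _)
  rw [hrest]
  have hlen : ((suffixHeapBuild S SA i).sort (· ≤ ·)).length = i + 1 := by
    rw [Finset.length_sort, card_build S T c SA hS hc hSA hSAsorted i (le_of_lt hi)]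
  rw [List.getElem?_append_right (by omega)]
  simp [hlen]
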